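/- Let s ≥ 2 and let w := exp(2πi/s) ∈ ℂ. Then for all integers 0 ≤ k ≤ n, the identity (C_s(n,k) : ℂ) = ∑_{j ≥ 0} (-1)^j C(n - j, k) · ∑ C(k, k_1) C(k, k_2) ⋯ C(k, k_{s-1}) · w^{-∑_{r=1}^{s-1} r k_r} holds in ℂ, where the inner sum runs over all (s-1)-tuples (k_1, …, k_{s-1}) of natural numbers with k_1 + k_2 + ⋯ + k_{s-1} = j, and C(a,b) denotes the ordinary binomial coefficient (zero when a < 0, b < 0, or b > a). -/

import Mathlib

/-- The quasi-bi^s-nomial coefficients `C_s(n,k)`. -/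
def quasi (s : ℕ) : ℕ → ℤ → ℤ
  | 0, k => if k = 0 then 1 else 0
  | n+1, k =>
    if k < 0 ∨ (n+1 : ℤ) < k then 0
    else quasi s n k + ∑ j ∈ Finset.range s, if j ≤ n then quasi s (n - j) (k - 1) else 0
  termination_by n _ => n
  decreasing_by all_goals omega

/-- Binomial coefficient `C(a,b)` with integer upper argument, zero when `a < 0`
(and, as usual, zero when `b > a ≥ 0`). -/
def ichoose (a : ℤ) (b : ℕ) : ℤ :=
  if a < 0 then 0 else (a.toNat.choose b : ℤ)

open Finset Polynomial

lemma quasi_neg (s : ℕ) (n : ℕ) (k : ℤ) (hk : k < 0) : quasi s n k = 0 := by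
  cases n with
  | zero => simp [quasi]; omega
  | succ m => rw [quasi]; simp [hk]

lemma quasi_gt (s : ℕ) (n : ℕ) (k : ℤ) (hk : (n:ℤ) < k) : quasi s n k = 0 := by
  cases n with
  | zero => simp [quasi]; omega
  | succ m => rw [quasi]; simp; omega

lemma ichoose_neg (a : ℤ) (b : ℕ) (h : a < 0) : ichoose a b = 0 := by simp [ichoose, h]

lemma ichoose_lt (a : ℤ) (b : ℕ) (h : a < b) : ichoose a b = 0 := by
  unfold ichoose
  split
  · rfl
  · rename_i h'
    push_neg at h'
    rw [Nat.choose_eq_zero_of_lt (by omega)]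
    simp

lemma ichoose_zero (a : ℤ) (h : 0 ≤ a) : ichoose a 0 = 1 := by
  simp [ichoose, not_lt.2 h]

lemma ichoose_pascal (m : ℤ) (k : ℕ) :
    ichoose (m+1) (k+1) = ichoose m (k+1) + ichoose m k := by
  rcases lt_trichotomy m (-1) with h | h | h
  · rw [ichoose_neg _ _ (by omega), ichoose_neg _ _ (by omega), ichoose_neg _ _ (by omega)]; ring
  · subst h
    have h0 : (-1 : ℤ) + 1 = 0 := by ring
    rw [h0, ichoose_neg (-1) (k+1) (by omega), ichoose_neg (-1) k (by omega)]
    simp [ichoose]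
  · have hm : 0 ≤ m := by omega
    obtain ⟨a, rfl⟩ := Int.eq_ofNat_of_zero_le hm
    unfold ichoose
    rw [if_neg (by omega), if_neg (by omega), if_neg (by omega)]
    have : ((a:ℤ)+1).toNat = a + 1 := by omega
    rw [this]
    simp [Nat.choose_succ_succ]
    ring

-- scalar: ∏_{r<s} (z - ζ^r) = z^s - 1
lemma prod_sub_pow {s : ℕ} (hs : 0 < s) {ζ : ℂ} (hζ : IsPrimitiveRoot ζ s) (z : ℂ) :
    ∏ r ∈ range s, (z - ζ ^ r) = z ^ s - 1 := by
  have h1 : (X : ℂ[X]) ^ s - 1 = ∏ μ ∈ nthRootsFinset s (1 : ℂ), (X - C μ) :=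
    X_pow_sub_one_eq_prod hs hζ
  have h2 : nthRootsFinset s (1 : ℂ) = (range s).image (fun r => ζ ^ r) := by
    rw [nthRootsFinset]
    rw [hζ.nthRoots_eq (one_pow s)]
    ext x
    simp [Multiset.mem_toFinset]
  have h3 : ∏ μ ∈ nthRootsFinset s (1 : ℂ), (X - C μ) = ∏ r ∈ range s, (X - C (ζ ^ r)) := by
    rw [h2]
    rw [Finset.prod_image]
    intro i hi j hj hij
    exact hζ.pow_inj (mem_range.1 hi) (mem_range.1 hj) hij
  have := congrArg (Polynomial.eval z) (h1.trans h3)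
  rw [eval_sub, eval_pow, eval_one, eval_prod] at this
  simp only [eval_sub, eval_X, eval_pow, eval_C] at this
  rw [← this]

lemma prod_one_add_pow {s : ℕ} (hs : 0 < s) {ζ : ℂ} (hζ : IsPrimitiveRoot ζ s) (t : ℂ) :
    ∏ r ∈ range s, (1 + ζ ^ r * t) = 1 - (-t) ^ s := by
  rcases eq_or_ne t 0 with rfl | ht
  · simp [zero_pow hs.ne']
  · have hnt : (-t) ≠ 0 := neg_ne_zero.2 ht
    have key : ∀ r : ℕ, 1 + ζ ^ r * t = (-t) * ((-t)⁻¹ - ζ ^ r) := by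
      intro r
      field_simp
      ring
    calc ∏ r ∈ range s, (1 + ζ ^ r * t)
        = ∏ r ∈ range s, ((-t) * ((-t)⁻¹ - ζ ^ r)) := by
          exact Finset.prod_congr rfl (fun r _ => key r)
      _ = (-t) ^ s * (((-t)⁻¹) ^ s - 1) := by
          rw [Finset.prod_mul_distrib, Finset.prod_const, card_range,
            prod_sub_pow hs hζ]
      _ = 1 - (-t) ^ s := by
          rw [mul_sub, ← mul_pow, mul_inv_cancel₀ hnt, one_pow, mul_one]

lemma prod_one_add_X {s : ℕ} (hs : 0 < s) {ζ : ℂ} (hζ : IsPrimitiveRoot ζ s) :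
    ∏ r ∈ range s, (1 + C (ζ ^ r) * X) = 1 - (-X : ℂ[X]) ^ s := by
  apply Polynomial.funext
  intro t
  rw [eval_prod]
  simp only [eval_add, eval_one, eval_mul, eval_C, eval_X, eval_sub, eval_pow, eval_neg]
  exact prod_one_add_pow hs hζ t

noncomputable def qpoly (s : ℕ) : ℂ[X] := ∑ i ∈ range s, (-X : ℂ[X]) ^ i

lemma one_add_X_mul_qpoly (s : ℕ) : (1 + X) * qpoly s = 1 - (-X : ℂ[X]) ^ s := by
  have h := geom_sum_mul (-X : ℂ[X]) s
  unfold qpoly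
  linear_combination -h

lemma prod_fin_eq_qpoly {s : ℕ} (hs : 2 ≤ s) {ζ : ℂ} (hζ : IsPrimitiveRoot ζ s) :
    ∏ i ∈ range (s-1), (1 + C (ζ ^ (i+1)) * X) = qpoly s := by
  have h1X : (1 + X : ℂ[X]) ≠ 0 := by
    intro h
    have := congrArg (Polynomial.coeff · 0) h
    simp at this
  apply mul_left_cancel₀ h1X
  rw [one_add_X_mul_qpoly]
  obtain ⟨m, rfl⟩ : ∃ m, s = m + 1 := ⟨s - 1, by omega⟩
  have h2 := prod_one_add_X (by omega : 0 < m + 1) hζ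
  rw [Finset.prod_range_succ'] at h2
  simp only [pow_zero, map_one, one_mul] at h2
  rw [← h2]
  simp only [Nat.add_sub_cancel]
  ring

lemma one_add_CX_pow (c : ℂ) (k : ℕ) :
    (1 + C c * X)^k = ∑ t ∈ range (k+1), C ((k.choose t : ℂ) * c ^ t) * X ^ t := by
  rw [add_comm, add_pow]
  refine Finset.sum_congr rfl fun t _ => ?_
  simp only [one_pow, mul_one, mul_pow, C_pow]
  rw [← C_eq_natCast, C_mul, C_pow]
  ring

lemma coeff_prod_one_add_CX_pow (m k j : ℕ) (c : Fin m → ℂ) :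
    (∏ i : Fin m, (1 + C (c i) * X)^k).coeff j
      = ∑ v ∈ Fintype.piFinset (fun _ : Fin m => range (k+1)),
          if (∑ i, v i) = j then ∏ i, ((k.choose (v i) : ℂ) * c i ^ (v i)) else 0 := by
  have h1 : ∏ i : Fin m, (1 + C (c i) * X)^k
      = ∑ v ∈ Fintype.piFinset (fun _ : Fin m => range (k+1)),
          C (∏ i, ((k.choose (v i) : ℂ) * c i ^ (v i))) * X ^ (∑ i, v i) := by
    calc ∏ i : Fin m, (1 + C (c i) * X)^k
        = ∏ i : Fin m, ∑ t ∈ range (k+1), C ((k.choose t : ℂ) * c i ^ t) * X ^ t := by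
          exact Finset.prod_congr rfl fun i _ => one_add_CX_pow (c i) k
      _ = ∑ v ∈ Fintype.piFinset (fun _ : Fin m => range (k+1)),
            ∏ i, (C ((k.choose (v i) : ℂ) * c i ^ (v i)) * X ^ (v i)) :=
          Finset.prod_univ_sum _ _
      _ = _ := by
          refine Finset.sum_congr rfl fun v _ => ?_
          rw [Finset.prod_mul_distrib, ← map_prod, Finset.prod_pow_eq_pow_sum]
  rw [h1, finset_sum_coeff]
  refine Finset.sum_congr rfl fun v _ => ?_
  rw [coeff_C_mul, coeff_X_pow]
  by_cases h : (∑ i, v i) = j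
  · simp [h]
  · rw [if_neg h, if_neg (fun hh => h hh.symm), mul_zero]

lemma qpoly_coeff_zero {s : ℕ} (hs : 1 ≤ s) : (qpoly s).coeff 0 = 1 := by
  unfold qpoly
  rw [finset_sum_coeff]
  obtain ⟨m, rfl⟩ : ∃ m, s = m + 1 := ⟨s - 1, by omega⟩
  rw [Finset.sum_eq_single 0]
  · simp
  · intro i _ hi
    have hx : (-X : ℂ[X])^i = C ((-1:ℂ)^i) * X^i := by
      rw [← neg_one_mul (X : ℂ[X]), mul_pow, map_pow, map_neg, map_one]
    rw [hx, coeff_C_mul, coeff_X_pow, if_neg (fun hh => hi hh.symm), mul_zero]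
  · simp

lemma qpoly_pow_coeff_zero {s : ℕ} (hs : 1 ≤ s) (k : ℕ) : (qpoly s ^ k).coeff 0 = 1 := by
  have h : constantCoeff (qpoly s ^ k) = (constantCoeff (qpoly s))^k := map_pow _ _ _
  rw [constantCoeff_apply, constantCoeff_apply] at h
  rw [h, qpoly_coeff_zero hs, one_pow]

set_option maxRecDepth 8000 in
lemma qpoly_pow_succ_coeff (s k j : ℕ) :
    (qpoly s ^ (k+1)).coeff j
      = ∑ i ∈ range s, (if i ≤ j then (-1:ℂ)^i * (qpoly s ^ k).coeff (j-i) else 0) := by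
  have h1 : qpoly s ^ (k+1) = ∑ i ∈ range s, C ((-1:ℂ)^i) * (qpoly s ^ k * X ^ i) := by
    rw [pow_succ]
    unfold qpoly
    rw [Finset.mul_sum]
    refine Finset.sum_congr rfl fun i _ => ?_
    have hx : (-X : ℂ[X])^i = C ((-1:ℂ)^i) * X^i := by
      rw [← neg_one_mul (X : ℂ[X]), mul_pow, map_pow, map_neg, map_one]
    rw [hx]
    ring
  rw [h1, finset_sum_coeff]
  refine Finset.sum_congr rfl fun i _ => ?_
  rw [coeff_C_mul, coeff_mul_X_pow']
  by_cases h : i ≤ j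
  · rw [if_pos h, if_pos h]
  · rw [if_neg h, if_neg h, mul_zero]

lemma sum_range_if_le (N i : ℕ) (f : ℕ → ℂ) :
    ∑ j ∈ range N, (if i ≤ j then f j else 0) = ∑ m ∈ range (N - i), f (i + m) := by
  rcases le_or_gt i N with h | h
  · rw [Finset.range_eq_Ico, ← Finset.sum_Ico_consecutive _ (Nat.zero_le i) h]
    have h1 : ∑ j ∈ Finset.Ico 0 i, (if i ≤ j then f j else 0) = 0 := by
      apply Finset.sum_eq_zero
      intro j hj
      rw [Finset.mem_Ico] at hj
      rw [if_neg (by omega)]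
    rw [h1, zero_add, Finset.sum_Ico_eq_sum_range]
    refine Finset.sum_congr rfl fun m hm => ?_
    rw [if_pos (by omega)]
  · have h1 : N - i = 0 := by omega
    rw [h1]
    simp only [Finset.range_zero, Finset.sum_empty]
    apply Finset.sum_eq_zero
    intro j hj
    rw [Finset.mem_range] at hj
    rw [if_neg (by omega)]

noncomputable def Rfun (s n k : ℕ) : ℂ :=
  ∑ j ∈ range (n+1), (-1:ℂ)^j * (ichoose ((n:ℤ) - j) k : ℂ) * (qpoly s ^ k).coeff j

lemma neg_one_pow_mul_self (i : ℕ) : ((-1:ℂ)^i) * ((-1:ℂ)^i) = 1 := by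
  rw [← pow_add, ← two_mul, pow_mul]
  norm_num

lemma Rfun_succ (s n k : ℕ) :
    Rfun s (n+1) (k+1) = Rfun s n (k+1) + ∑ i ∈ range s, (if i ≤ n then Rfun s (n-i) k else 0) := by
  have step1 : Rfun s (n+1) (k+1)
      = Rfun s n (k+1) + ∑ j ∈ range (n+2),
          (-1:ℂ)^j * (ichoose ((n:ℤ) - j) k : ℂ) * (qpoly s ^ (k+1)).coeff j := by
    unfold Rfun
    have h1 : ∀ j ∈ range (n+2),
        (-1:ℂ)^j * (ichoose (((n+1:ℕ):ℤ) - j) (k+1) : ℂ) * (qpoly s ^ (k+1)).coeff j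
        = ((-1:ℂ)^j * (ichoose ((n:ℤ) - j) (k+1) : ℂ) * (qpoly s ^ (k+1)).coeff j)
          + ((-1:ℂ)^j * (ichoose ((n:ℤ) - j) k : ℂ) * (qpoly s ^ (k+1)).coeff j) := by
      intro j _
      have he : ((n+1:ℕ):ℤ) - j = ((n:ℤ) - j) + 1 := by push_cast; ring
      rw [he, ichoose_pascal ((n:ℤ) - j) k]
      push_cast
      ring
    rw [Finset.sum_congr rfl h1, Finset.sum_add_distrib]
    congr 1
    rw [show n + 1 + 1 = (n+1)+1 from rfl, Finset.sum_range_succ]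
    have hz : (ichoose ((n:ℤ) - ((n+1:ℕ):ℤ)) (k+1) : ℂ) = 0 := by
      rw [ichoose_neg _ _ (by push_cast; omega)]
      exact Int.cast_zero
    rw [hz, mul_zero, zero_mul, add_zero]
  rw [step1]
  congr 1
  calc ∑ j ∈ range (n+2), (-1:ℂ)^j * (ichoose ((n:ℤ) - j) k : ℂ) * (qpoly s ^ (k+1)).coeff j
      = ∑ j ∈ range (n+2), ∑ i ∈ range s,
          (if i ≤ j then (-1:ℂ)^j * (ichoose ((n:ℤ)-j) k : ℂ) * ((-1:ℂ)^i * (qpoly s ^ k).coeff (j-i)) else 0) := by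
        refine Finset.sum_congr rfl fun j _ => ?_
        rw [qpoly_pow_succ_coeff, Finset.mul_sum]
        refine Finset.sum_congr rfl fun i _ => ?_
        by_cases h : i ≤ j
        · rw [if_pos h, if_pos h]
        · rw [if_neg h, if_neg h, mul_zero]
    _ = ∑ i ∈ range s, ∑ j ∈ range (n+2),
          (if i ≤ j then (-1:ℂ)^j * (ichoose ((n:ℤ)-j) k : ℂ) * ((-1:ℂ)^i * (qpoly s ^ k).coeff (j-i)) else 0) :=
        Finset.sum_comm
    _ = ∑ i ∈ range s, ∑ m ∈ range (n+2-i),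
          (-1:ℂ)^(i+m) * (ichoose ((n:ℤ)-(i+m:ℕ)) k : ℂ) * ((-1:ℂ)^i * (qpoly s ^ k).coeff ((i+m)-i)) := by
        refine Finset.sum_congr rfl fun i _ => ?_
        exact sum_range_if_le (n+2) i _
    _ = ∑ i ∈ range s, (if i ≤ n then Rfun s (n-i) k else 0) := by
        refine Finset.sum_congr rfl fun i _ => ?_
        by_cases h : i ≤ n
        · rw [if_pos h]
          have hn2 : n + 2 - i = (n - i + 1) + 1 := by omega
          rw [hn2, Finset.sum_range_succ]
          have hlast : (ichoose ((n:ℤ) - ((i + (n-i+1) : ℕ):ℤ)) k : ℂ) = 0 := by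
            rw [ichoose_neg _ _ (by push_cast; omega)]
            exact Int.cast_zero
          rw [hlast, mul_zero, zero_mul, add_zero]
          unfold Rfun
          refine Finset.sum_congr rfl fun m hm => ?_
          rw [Finset.mem_range] at hm
          have h1 : (i + m) - i = m := by omega
          have h2 : (((n - i:ℕ):ℤ)) - (m:ℤ) = (n:ℤ) - ((i + m : ℕ):ℤ) := by push_cast; omega
          rw [h1, h2]
          have hsign := neg_one_pow_mul_self i
          calc (-1:ℂ)^(i+m) * (ichoose ((n:ℤ) - ((i + m : ℕ):ℤ)) k : ℂ) * ((-1:ℂ)^i * (qpoly s ^ k).coeff m)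
              = ((-1:ℂ)^i * (-1:ℂ)^i) * ((-1:ℂ)^m * (ichoose ((n:ℤ) - ((i + m : ℕ):ℤ)) k : ℂ) * (qpoly s ^ k).coeff m) := by
                rw [pow_add]; ring
            _ = (-1:ℂ)^m * (ichoose ((n:ℤ) - ((i + m : ℕ):ℤ)) k : ℂ) * (qpoly s ^ k).coeff m := by
                rw [hsign, one_mul]
        · rw [if_neg h]
          apply Finset.sum_eq_zero
          intro m _
          have hz : (ichoose ((n:ℤ) - ((i + m : ℕ):ℤ)) k : ℂ) = 0 := by
            rw [ichoose_neg _ _ (by push_cast; omega)]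
            exact Int.cast_zero
          rw [hz, mul_zero, zero_mul]

lemma Rfun_zero (s n : ℕ) : Rfun s n 0 = 1 := by
  unfold Rfun
  rw [Finset.sum_eq_single 0]
  · simp [ichoose_zero (n:ℤ) (Int.natCast_nonneg n)]
  · intro j _ hj
    rw [pow_zero, Polynomial.coeff_one, if_neg hj, mul_zero]
  · simp

lemma Rfun_eq_zero (s n k : ℕ) (h : n < k) : Rfun s n k = 0 := by
  unfold Rfun
  apply Finset.sum_eq_zero
  intro j _
  rw [ichoose_lt _ _ (by push_cast; omega), Int.cast_zero, mul_zero, zero_mul]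

lemma quasi_zero (s n : ℕ) : quasi s n 0 = 1 := by
  induction n with
  | zero => simp [quasi]
  | succ m ih =>
    rw [quasi, if_neg]
    case hnc => omega
    have h : ∀ j ∈ range s, (if j ≤ m then quasi s (m - j) (0 - 1) else 0) = 0 := by
      intro j _
      split
      · exact quasi_neg _ _ _ (by omega)
      · rfl
    rw [Finset.sum_congr rfl h, ih]
    simp

lemma quasi_eq_R {s : ℕ} (hs : 1 ≤ s) : ∀ n k : ℕ, ((quasi s n (k:ℤ) : ℤ) : ℂ) = Rfun s n k := by
  intro n
  induction n using Nat.strong_induction_on with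
  | _ n IH =>
  match n with
  | 0 => 
    intro k
    cases k with
    | zero =>
      rw [show quasi s 0 ((0:ℕ):ℤ) = 1 from by simp [quasi]]
      unfold Rfun
      rw [Finset.sum_range_one]
      simp [qpoly_pow_coeff_zero hs, ichoose]
    | succ k' =>
      rw [show quasi s 0 (((k'+1:ℕ)):ℤ) = 0 from by simp [quasi]; omega]
      unfold Rfun
      rw [Finset.sum_range_one]
      rw [ichoose_lt _ _ (by push_cast; omega)]
      simp
  | n+1 =>
    intro k
    cases k with
    | zero =>
      rw [show (((0:ℕ)):ℤ) = (0:ℤ) from rfl, quasi_zero, Rfun_zero]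
      simp
    | succ k' =>
      rcases le_or_gt (k'+1) (n+1) with hle | hlt
      · rw [quasi, if_neg (by push_cast; omega)]
        have hc : ((k'+1:ℕ):ℤ) - 1 = ((k':ℕ):ℤ) := by push_cast; ring
        rw [hc]
        push_cast [apply_ite (fun z : ℤ => (z : ℂ))]
        have IH1 := IH n (by omega) (k'+1)
        rw [show ((k'+1:ℕ):ℤ) = (k':ℤ)+1 from by push_cast; ring] at IH1
        rw [IH1]
        have h2 : ∀ j ∈ range s,
            (if j ≤ n then ((quasi s (n-j) ((k':ℕ):ℤ) : ℤ) : ℂ) else 0)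
              = (if j ≤ n then Rfun s (n-j) k' else 0) := by
          intro j _
          split
          · exact IH (n-j) (by omega) k'
          · rfl
        rw [Finset.sum_congr rfl h2]
        exact (Rfun_succ s n k').symm
      · rw [quasi_gt s (n+1) _ (by push_cast; omega), Rfun_eq_zero s (n+1) (k'+1) (by omega)]
        simp

/-- For `s ≥ 2`, `w = exp(2πi/s)` and `0 ≤ k ≤ n`:
`C_s(n,k) = ∑_{j ≥ 0} (-1)^j C(n-j,k) ∑_{k_1+⋯+k_{s-1}=j} C(k,k_1)⋯C(k,k_{s-1}) w^{-∑_{r=1}^{s-1} r k_r}`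
holds in `ℂ` (tuples indexed from `0` in Lean, so `k_r = v (r-1)`). -/
theorem quasi_root_of_unity_identity (s n k : ℕ) (hs : 2 ≤ s) (hk : k ≤ n) :
    (quasi s n (k : ℤ) : ℂ) =
      ∑ᶠ j : ℕ, (-1 : ℂ) ^ j * (ichoose ((n : ℤ) - j) k : ℂ) *
        ∑ᶠ v : Fin (s - 1) → ℕ,
          if (∑ i, v i) = j then
            (∏ i : Fin (s - 1), (k.choose (v i) : ℂ)) *
              (Complex.exp (2 * (Real.pi : ℂ) * Complex.I / (s : ℂ))) ^
                (-(∑ i : Fin (s - 1), (((i : ℕ) : ℤ) + 1) * (v i : ℤ)))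
          else 0 := by
  set w : ℂ := Complex.exp (2 * (Real.pi : ℂ) * Complex.I / (s : ℂ)) with hwdef
  have hw : IsPrimitiveRoot w s := Complex.isPrimitiveRoot_exp s (by omega)
  have hζ : IsPrimitiveRoot w⁻¹ s := hw.inv
  have hinner : ∀ j : ℕ,
      (∑ᶠ v : Fin (s - 1) → ℕ,
        if (∑ i, v i) = j then
          (∏ i : Fin (s - 1), (k.choose (v i) : ℂ)) *
            w ^ (-(∑ i : Fin (s - 1), (((i : ℕ) : ℤ) + 1) * (v i : ℤ)))
        else 0) = (qpoly s ^ k).coeff j := by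
    intro j
    have hterm : ∀ v : Fin (s-1) → ℕ,
        (if (∑ i, v i) = j then
          (∏ i : Fin (s-1), (k.choose (v i) : ℂ)) *
            w ^ (-(∑ i : Fin (s-1), (((i : ℕ) : ℤ) + 1) * (v i : ℤ)))
        else 0)
        = (if (∑ i, v i) = j then
            ∏ i : Fin (s-1), ((k.choose (v i) : ℂ) * ((w⁻¹)^((i:ℕ)+1)) ^ (v i)) else 0) := by
      intro v
      by_cases h : (∑ i, v i) = j
      · rw [if_pos h, if_pos h]
        have hE : (-(∑ i : Fin (s-1), (((i : ℕ) : ℤ) + 1) * (v i : ℤ)))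
            = -(((∑ i : Fin (s-1), ((i:ℕ)+1) * v i : ℕ)) : ℤ) := by push_cast; ring
        rw [hE, zpow_neg, zpow_natCast, ← inv_pow, ← Finset.prod_pow_eq_pow_sum,
          ← Finset.prod_mul_distrib]
        refine Finset.prod_congr rfl fun i _ => ?_
        rw [pow_mul]
      · rw [if_neg h, if_neg h]
    have hsub : (Function.support fun v : Fin (s-1) → ℕ =>
        if (∑ i, v i) = j then
          (∏ i : Fin (s-1), (k.choose (v i) : ℂ)) *
            w ^ (-(∑ i : Fin (s-1), (((i : ℕ) : ℤ) + 1) * (v i : ℤ)))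
        else 0) ⊆ ↑(Fintype.piFinset (fun _ : Fin (s-1) => range (k+1))) := by
      intro v hv
      simp only [Function.mem_support, ne_eq] at hv
      by_contra hmem
      apply hv
      rw [Finset.mem_coe, Fintype.mem_piFinset] at hmem
      push_neg at hmem
      obtain ⟨i, hi⟩ := hmem
      rw [Finset.mem_range, not_lt] at hi
      have hz : (k.choose (v i) : ℂ) = 0 := by
        rw [Nat.choose_eq_zero_of_lt (by omega), Nat.cast_zero]
      have hprod : (∏ i' : Fin (s-1), (k.choose (v i') : ℂ)) = 0 :=
        Finset.prod_eq_zero (Finset.mem_univ i) hz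
      split
      · rw [hprod, zero_mul]
      · rfl
    rw [finsum_eq_finset_sum_of_support_subset _ hsub,
      Finset.sum_congr rfl (fun v _ => hterm v),
      ← coeff_prod_one_add_CX_pow (s-1) k j (fun i => (w⁻¹)^((i:ℕ)+1))]
    congr 1
    rw [Finset.prod_pow]
    congr 1
    rw [Fin.prod_univ_eq_prod_range (fun r => 1 + C ((w⁻¹)^(r+1)) * X) (s-1)]
    exact prod_fin_eq_qpoly hs hζ
  have hstep : (∑ᶠ j : ℕ, (-1 : ℂ) ^ j * (ichoose ((n : ℤ) - j) k : ℂ) *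
        ∑ᶠ v : Fin (s - 1) → ℕ,
          if (∑ i, v i) = j then
            (∏ i : Fin (s - 1), (k.choose (v i) : ℂ)) *
              w ^ (-(∑ i : Fin (s - 1), (((i : ℕ) : ℤ) + 1) * (v i : ℤ)))
          else 0)
      = ∑ᶠ j : ℕ, (-1 : ℂ) ^ j * (ichoose ((n : ℤ) - j) k : ℂ) * (qpoly s ^ k).coeff j :=
    finsum_congr fun j => by rw [hinner j]
  rw [hstep]
  have hsub2 : (Function.support fun j : ℕ =>
      (-1 : ℂ) ^ j * (ichoose ((n : ℤ) - j) k : ℂ) * (qpoly s ^ k).coeff j)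
      ⊆ ↑(range (n+1)) := by
    intro j hj
    simp only [Function.mem_support, ne_eq] at hj
    rw [Finset.mem_coe, Finset.mem_range]
    by_contra hlt
    push_neg at hlt
    apply hj
    rw [ichoose_neg _ _ (by push_cast; omega), Int.cast_zero, mul_zero, zero_mul]
  rw [finsum_eq_finset_sum_of_support_subset _ hsub2]
  exact quasi_eq_R (by omega) n k
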